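/- arXiv:0708.4172 — 2 statements merged into one kernel-verified Lean document; each statement's English description precedes it below -/
import Mathlib

section
/- Let ι : W → W ⊗ Λ²W be w ↦ (a,b,c) ↦ −2 g_{a[b} w_{c]} (i.e. ι(w) = ∑ᵢ eᵢ ⊗ (eᵢ ∧ w) up to sign conventions), let σ : Λ²W ⊗ Λ•W → Λ•W be the spin action σ(v∧w ⊗ e) = −(1/8)(v.w.e − w.v.e), and let ε(v ⊗ e) = v.e. Then the composition W ⊗ Λ•W → W ⊗ Λ²W ⊗ Λ•W → W ⊗ Λ•W → Λ•W given by (ι ⊗ Id), (Id ⊗ σ), ε equals −((n−1)/2)·ε. -/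
noncomputable section

open scoped InnerProductSpace

/-- The Clifford-type action `ε(v ⊗ e) = v.e = v ∧ e − v ⌟ e` on the exterior algebra
of `ℝⁿ`. -/
def cliffordAction {n : ℕ} (v : EuclideanSpace ℝ (Fin n))
    (ω : ExteriorAlgebra ℝ (EuclideanSpace ℝ (Fin n))) :
    ExteriorAlgebra ℝ (EuclideanSpace ℝ (Fin n)) :=
  ExteriorAlgebra.ι ℝ v * ω
    - CliffordAlgebra.contractLeft (innerₗ (EuclideanSpace ℝ (Fin n)) v) ω


lemma cliff_smul_e {n : ℕ} (v : EuclideanSpace ℝ (Fin n)) (r : ℝ) (e) :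
    cliffordAction v (r • e) = r • cliffordAction v e := by
  unfold cliffordAction
  rw [map_smul, mul_smul_comm, smul_sub]

lemma cliff_sub_e {n : ℕ} (v : EuclideanSpace ℝ (Fin n)) (e f) :
    cliffordAction v (e - f) = cliffordAction v e - cliffordAction v f := by
  unfold cliffordAction
  rw [map_sub, mul_sub]
  abel

lemma cliff_smul_v {n : ℕ} (r : ℝ) (v : EuclideanSpace ℝ (Fin n)) (e) :
    cliffordAction (r • v) e = r • cliffordAction v e := by
  unfold cliffordAction
  rw [map_smul, map_smul, map_smul, smul_mul_assoc, LinearMap.smul_apply, smul_sub]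

lemma cliff_sum_v {n m : ℕ} (f : Fin m → EuclideanSpace ℝ (Fin n)) (e) :
    cliffordAction (∑ i, f i) e = ∑ i, cliffordAction (f i) e := by
  unfold cliffordAction
  rw [map_sum, map_sum, map_sum, Finset.sum_mul, LinearMap.sum_apply, Finset.sum_sub_distrib]

lemma cliff_anticomm {n : ℕ} (v u : EuclideanSpace ℝ (Fin n)) (e) :
    cliffordAction v (cliffordAction u e) + cliffordAction u (cliffordAction v e)
      = (-2 * ⟪v, u⟫_ℝ) • e := by
  unfold cliffordAction
  simp only [mul_sub, map_sub, CliffordAlgebra.contractLeft_ι_mul, innerₗ_apply_apply]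
  have h1 : ExteriorAlgebra.ι ℝ v * (ExteriorAlgebra.ι ℝ u * e)
      = -(ExteriorAlgebra.ι ℝ u * (ExteriorAlgebra.ι ℝ v * e)) := by
    rw [← mul_assoc, ← mul_assoc, ← neg_mul, eq_comm, neg_mul, neg_eq_iff_add_eq_zero,
      ← add_mul, ExteriorAlgebra.ι_add_mul_swap, zero_mul]
  have h2 := CliffordAlgebra.contractLeft_comm (d := innerₗ (EuclideanSpace ℝ (Fin n)) v)
    (d' := innerₗ (EuclideanSpace ℝ (Fin n)) u) e
  rw [h1, h2, real_inner_comm u v]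
  module

lemma cliff_sq {n : ℕ} (v : EuclideanSpace ℝ (Fin n)) (e) :
    cliffordAction v (cliffordAction v e) = (-⟪v, v⟫_ℝ) • e := by
  have h := cliff_anticomm v v e
  have h2 : (2 : ℝ) • cliffordAction v (cliffordAction v e) = (2 : ℝ) • ((-⟪v, v⟫_ℝ) • e) := by
    rw [two_smul, h, smul_smul]; ring_nf
  exact smul_right_injective _ (two_ne_zero) h2

/-- The spin action `σ(v ∧ w ⊗ e) = −(1/8)(v.w.e − w.v.e)` of a simple bivector. -/
def spinAction {n : ℕ} (v w : EuclideanSpace ℝ (Fin n))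
    (e : ExteriorAlgebra ℝ (EuclideanSpace ℝ (Fin n))) :
    ExteriorAlgebra ℝ (EuclideanSpace ℝ (Fin n)) :=
  (-(1/8 : ℝ)) • (cliffordAction v (cliffordAction w e)
    - cliffordAction w (cliffordAction v e))

/-- Proposition: the composition `(ε) ∘ (Id ⊗ σ) ∘ (ι ⊗ Id) : W ⊗ Λ•W → Λ•W`, where
`ι : W → W ⊗ Λ²W` is `w_a ↦ −2g_{a[b}w_{c]}` (so `ι(w) = ∑ᵢ eᵢ ⊗ (−2 eᵢ∧w)` for an
orthonormal basis `eᵢ`), equals `−((n−1)/2)·ε`.  Concretely: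
`∑ᵢ (−2) eᵢ.(σ(eᵢ∧w ⊗ e)) = −((n−1)/2) w.e`. -/
theorem iota_spin_epsilon_composition {n : ℕ}
    (b : OrthonormalBasis (Fin n) ℝ (EuclideanSpace ℝ (Fin n)))
    (w : EuclideanSpace ℝ (Fin n))
    (e : ExteriorAlgebra ℝ (EuclideanSpace ℝ (Fin n))) :
    ∑ i : Fin n, (-2 : ℝ) • cliffordAction (b i) (spinAction (b i) w e)
      = (-(((n : ℝ) - 1) / 2)) • cliffordAction w e := by
  have key : ∀ i, (-2 : ℝ) • cliffordAction (b i) (spinAction (b i) w e)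
      = (-(1/2 : ℝ)) • cliffordAction w e
        + ((1/2 : ℝ) * ⟪b i, w⟫_ℝ) • cliffordAction (b i) e := by
    intro i
    have hii : ⟪b i, b i⟫_ℝ = (1 : ℝ) := by
      simpa using orthonormal_iff_ite.mp b.orthonormal i i
    have hX : cliffordAction (b i) (cliffordAction (b i) (cliffordAction w e))
        = (-1 : ℝ) • cliffordAction w e := by
      rw [cliff_sq, hii]
    have hY : cliffordAction (b i) (cliffordAction w (cliffordAction (b i) e))
        = (-2 * ⟪b i, w⟫_ℝ) • cliffordAction (b i) e + cliffordAction w e := by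
      have h := cliff_anticomm (b i) w (cliffordAction (b i) e)
      have h2 : cliffordAction w (cliffordAction (b i) (cliffordAction (b i) e))
          = -cliffordAction w e := by
        rw [cliff_sq, hii, cliff_smul_e]
        module
      rw [h2] at h
      linear_combination (norm := module) h
    rw [spinAction, cliff_smul_e, cliff_sub_e, hX, hY, smul_smul, smul_sub]
    match_scalars <;> ring
  rw [Finset.sum_congr rfl fun i _ => key i, Finset.sum_add_distrib, Finset.sum_const,
    Finset.card_univ, Fintype.card_fin]
  have hw : ∑ i, ((1/2 : ℝ) * ⟪b i, w⟫_ℝ) • cliffordAction (b i) e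
      = (1/2 : ℝ) • cliffordAction w e := by
    calc ∑ i, ((1/2 : ℝ) * ⟪b i, w⟫_ℝ) • cliffordAction (b i) e
        = (1/2 : ℝ) • ∑ i, cliffordAction ((⟪b i, w⟫_ℝ) • b i) e := by
          rw [Finset.smul_sum]
          exact Finset.sum_congr rfl fun i _ => by rw [cliff_smul_v, smul_smul]
      _ = (1/2 : ℝ) • cliffordAction w e := by
          rw [← cliff_sum_v, b.sum_repr']
  rw [hw]
  match_scalars
  ring
end
end

section
/- Suppose E and F are representations of SO(n), π : W ⊗ E → F is an SO(n)-module homomorphism, ρ : Λ²W ⊗ E → E is the Lie algebra action, and ι : W → W ⊗ Λ²W is w_a ↦ −2g_{a[b}w_{c]}. If the composition π ∘ (Id ⊗ ρ) ∘ (ι ⊗ Id) : W ⊗ E → F equals w·π for a constant w, then for the associated bundles on a conformal manifold (induced from orthonormal frames of Λ¹[1]), the first-order operator D = π∘∇ : E[w] → F[w−1] is conformally invariant: it is independent of the choice of metric in the conformal class. -/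
noncomputable section

open scoped TensorProduct InnerProductSpace

/-- **Fundamental theorem on first order conformally invariant operators.**
`W = ℝⁿ` is the (co)tangent representation, `E`, `F` are `SO(n)`- (equivalently,
`so(n)`-) modules with actions `ρE`, `ρF` given on simple bivectors (`ρE t u` is the
action of `t∧u`), `π : W ⊗ E → F` is an `SO(n)`-module homomorphism, and
`ι : W → W ⊗ Λ²W` is `w_a ↦ −2g_{a[b}w_{c]}`, i.e. `ι(w) = ∑ₐ eₐ ⊗ (−2 eₐ∧w)`.
Sections of the associated bundles are modelled in a local trivialisation as maps
`M → E`; the connections `∇` and `∇̂` induced by two conformally related metrics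
`ĝ = Ω²g` act on sections of `E[w]` and differ by `∇̂φ = ∇φ + wΥ⊗φ − Γφ`, where
`Γφ = (Id⊗ρ)((ι Υ)⊗φ) = ∑ₐ eₐ ⊗ (−2 ρE(eₐ, Υ) φ)`.  If the composition
`π ∘ (Id⊗ρ) ∘ (ι⊗Id)` equals `w·π`, then the operator `D = π∘∇ : E[w] → F[w−1]` is
conformally invariant: `π∘∇̂ = π∘∇` regardless of the choice of metric in the
conformal class. -/
theorem first_order_conformally_invariant_operator
    {n : ℕ} {M E F : Type*}
    [AddCommGroup E] [Module ℝ E] [AddCommGroup F] [Module ℝ F]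
    -- the bivector actions on E and F (on simple bivectors t∧u), bilinear and
    -- antisymmetric:
    (ρE : EuclideanSpace ℝ (Fin n) →ₗ[ℝ] EuclideanSpace ℝ (Fin n) →ₗ[ℝ] Module.End ℝ E)
    (ρF : EuclideanSpace ℝ (Fin n) →ₗ[ℝ] EuclideanSpace ℝ (Fin n) →ₗ[ℝ] Module.End ℝ F)
    (hρEalt : ∀ t, ρE t t = 0) (hρFalt : ∀ t, ρF t t = 0)
    -- π : W ⊗ E → F (curried) is an so(n)-module homomorphism:
    (π : EuclideanSpace ℝ (Fin n) →ₗ[ℝ] E →ₗ[ℝ] F)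
    (hπequiv : ∀ (t u v : EuclideanSpace ℝ (Fin n)) (e : E),
      π ((1/2 : ℝ) • (⟪u, v⟫_ℝ • t - ⟪t, v⟫_ℝ • u)) e + π v (ρE t u e)
        = ρF t u (π v e))
    -- the composition π ∘ (Id⊗ρ) ∘ (ι⊗Id) equals w·π:
    (w : ℝ)
    (hw : ∀ (v : EuclideanSpace ℝ (Fin n)) (φ : E),
      ∑ a : Fin n, (-2 : ℝ) •
          π (EuclideanSpace.basisFun (Fin n) ℝ a)
            (ρE (EuclideanSpace.basisFun (Fin n) ℝ a) v φ)
        = w • π v φ)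
    -- the two connections on E[w], related by the conformal change formula with
    -- conformal 1-form Υ:
    (Υ : M → EuclideanSpace ℝ (Fin n))
    (conn connHat : (M → E) → M → (EuclideanSpace ℝ (Fin n) ⊗[ℝ] E))
    (hconf : ∀ (φ : M → E) (x : M),
      connHat φ x = conn φ x + w • (Υ x ⊗ₜ[ℝ] φ x)
        - ∑ a : Fin n, (EuclideanSpace.basisFun (Fin n) ℝ a) ⊗ₜ[ℝ]
            ((-2 : ℝ) • ρE (EuclideanSpace.basisFun (Fin n) ℝ a) (Υ x) (φ x))) :
    -- conclusion: D = π∘∇ is independent of the choice of metric: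
    ∀ (φ : M → E) (x : M),
      TensorProduct.lift π (connHat φ x) = TensorProduct.lift π (conn φ x) := by
  intro φ x
  rw [hconf, map_sub, map_add, map_smul, map_sum]
  simp only [TensorProduct.lift.tmul, map_smul]
  rw [hw (Υ x) (φ x)]
  abel
end
end
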